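/- Let A be an N × N complex matrix, and for positive integers m, k, p let d = m(k+1)+p and define the (d+1)N × (d+1)N block matrix C_{m,k,p}(A) = ∑_{j=0}^{d} |j⟩⟨j| ⊗ I − ∑_{i=0}^{m−1} ∑_{j=1}^{k} |i(k+1)+j⟩⟨i(k+1)+j−1| ⊗ (A/j) − ∑_{i=0}^{m−1} ∑_{j=0}^{k} |(i+1)(k+1)⟩⟨i(k+1)+j| ⊗ I − ∑_{j=d−p+1}^{d} |j⟩⟨j−1| ⊗ I. If ‖A‖ ≤ 1 (spectral norm) and k ≥ 5, then ‖C_{m,k,p}(A)‖ ≤ 2√k. -/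

import Mathlib

set_option maxHeartbeats 1000000
set_option synthInstance.maxHeartbeats 200000


open Matrix
open scoped Kronecker

private lemma idx_lt {m k p i j : ℕ} (hi : i < m) (hj : j < k + 1) :
    i * (k + 1) + j < m * (k + 1) + p + 1 :=
  calc i * (k + 1) + j < i * (k + 1) + (k + 1) := by omega
    _ = (i + 1) * (k + 1) := by ring
    _ ≤ m * (k + 1) := Nat.mul_le_mul_right _ hi
    _ ≤ m * (k + 1) + p + 1 := by omega

private lemma idx_lt' {m k p i : ℕ} (hi : i < m) :
    (i + 1) * (k + 1) ≤ m * (k + 1) + p :=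
  le_trans (Nat.mul_le_mul_right _ hi) (by omega)

/-- The matrix `C_{m,k,p}(A)` of Berry–Childs–Ostrander–Wang, acting on
`ℂ^{d+1} ⊗ ℂ^N` with `d = m(k+1)+p`. -/
noncomputable def Cmkp (m k p N : ℕ) (A : Matrix (Fin N) (Fin N) ℂ) :
    Matrix (Fin (m * (k + 1) + p + 1) × Fin N) (Fin (m * (k + 1) + p + 1) × Fin N) ℂ :=
  (∑ j : Fin (m * (k + 1) + p + 1), single j j (1 : ℂ)) ⊗ₖ (1 : Matrix (Fin N) (Fin N) ℂ)
  - ∑ i : Fin m, ∑ j : Fin k,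
      single
        (⟨i * (k + 1) + (j + 1), idx_lt i.2 (by omega)⟩ : Fin (m * (k + 1) + p + 1))
        (⟨i * (k + 1) + j, idx_lt i.2 (by omega)⟩ : Fin (m * (k + 1) + p + 1)) (1 : ℂ)
        ⊗ₖ ((((j : ℕ) + 1 : ℂ))⁻¹ • A)
  - ∑ i : Fin m, ∑ j : Fin (k + 1),
      single
        (⟨(i + 1) * (k + 1), Nat.lt_succ_of_le (idx_lt' i.2)⟩ : Fin (m * (k + 1) + p + 1))
        (⟨i * (k + 1) + j, idx_lt i.2 j.2⟩ : Fin (m * (k + 1) + p + 1)) (1 : ℂ)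
        ⊗ₖ (1 : Matrix (Fin N) (Fin N) ℂ)
  - ∑ j : Fin p,
      single
        (⟨m * (k + 1) + (j + 1), by omega⟩ : Fin (m * (k + 1) + p + 1))
        (⟨m * (k + 1) + j, by omega⟩ : Fin (m * (k + 1) + p + 1)) (1 : ℂ)
        ⊗ₖ (1 : Matrix (Fin N) (Fin N) ℂ)

/-! ### Auxiliary lemmas -/

private lemma euc_sum_apply {N : ℕ} {κ : Type*} [Fintype κ] (f : κ → EuclideanSpace ℂ (Fin N))
    (b : Fin N) : (∑ j, f j) b = ∑ j, f j b := by
  have h := congrFun (map_sum (WithLp.linearEquiv 2 ℂ (Fin N → ℂ)) f Finset.univ) b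
  rw [Finset.sum_apply] at h
  exact h

private lemma euc_norm_sq {N : ℕ} (z : EuclideanSpace ℂ (Fin N)) :
    ‖z‖ ^ 2 = ∑ b, ‖z b‖ ^ 2 := by
  rw [EuclideanSpace.norm_eq, Real.sq_sqrt (by positivity)]

/-- **Key norm bound.**  If a block matrix is a sum of Kronecker products
`single (r i) (c i j) 1 ⊗ₖ B i j` where the rows `r i` are distinct and all the
columns `c i j` are distinct, and each block has norm at most `β`, then the operator norm
of the whole matrix is at most `β * √(card κ)`. -/
private lemma key_norm_le {n N : ℕ} {ι κ : Type*} [Fintype ι] [Fintype κ]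
    (r : ι → Fin n) (c : ι → κ → Fin n) (B : ι → κ → Matrix (Fin N) (Fin N) ℂ) (β : ℝ)
    (hβ : 0 ≤ β) (hr : Function.Injective r)
    (hc : Function.Injective (fun q : ι × κ => c q.1 q.2))
    (hB : ∀ i j, ‖Matrix.toEuclideanCLM (𝕜 := ℂ) (B i j)‖ ≤ β) :
    ‖Matrix.toEuclideanCLM (𝕜 := ℂ)
      (∑ i : ι, ∑ j : κ, single (r i) (c i j) (1:ℂ) ⊗ₖ B i j)‖
      ≤ β * Real.sqrt (Fintype.card κ) := by
  classical
  apply ContinuousLinearMap.opNorm_le_bound _ (by positivity)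
  intro x
  set M : Matrix (Fin n × Fin N) (Fin n × Fin N) ℂ :=
    ∑ i : ι, ∑ j : κ, single (r i) (c i j) (1:ℂ) ⊗ₖ B i j with hM
  set y : Fin n × Fin N → ℂ := fun q => x q with hy
  set v : ι → κ → EuclideanSpace ℂ (Fin N) :=
    fun i j => (WithLp.equiv 2 _).symm (fun b => y (c i j, b)) with hv
  set g : ι → EuclideanSpace ℂ (Fin N) :=
    fun i => ∑ j, Matrix.toEuclideanCLM (𝕜 := ℂ) (B i j) (v i j) with hg
  -- the components of the image vector
  have hcomp : ∀ a b, Matrix.toEuclideanCLM (𝕜 := ℂ) M x (a, b)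
      = ∑ i, (if r i = a then g i b else 0) := by
    intro a b
    have h0 : Matrix.toEuclideanCLM (𝕜 := ℂ) M x (a, b) = (M *ᵥ y) (a, b) := rfl
    have h1 : ∀ i, g i b = ∑ j, ((B i j) *ᵥ (fun b' => y (c i j, b'))) b := by
      intro i
      rw [hg]; beta_reduce; rw [euc_sum_apply]
      exact Finset.sum_congr rfl fun j _ => rfl
    rw [h0, hM]
    simp only [Matrix.mulVec, dotProduct, Matrix.sum_apply, Finset.sum_mul]
    rw [Finset.sum_comm]
    refine Finset.sum_congr rfl fun i _ => ?_
    rw [Finset.sum_comm, h1]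
    rcases eq_or_ne (r i) a with hra | hra
    · rw [if_pos hra]
      refine Finset.sum_congr rfl fun j _ => ?_
      simp only [Matrix.kroneckerMap_apply, Matrix.single, Matrix.of_apply,
        Matrix.mulVec, dotProduct, hra]
      rw [Fintype.sum_prod_type]
      simp [ite_and, ite_mul, Finset.sum_ite_eq]
    · rw [if_neg hra]
      refine Finset.sum_eq_zero fun j _ => Finset.sum_eq_zero fun q _ => ?_
      simp [Matrix.single, hra]
  -- squared norm of the image
  have hTxsq : ‖Matrix.toEuclideanCLM (𝕜 := ℂ) M x‖ ^ 2
      = ∑ a, ∑ b, ‖Matrix.toEuclideanCLM (𝕜 := ℂ) M x (a, b)‖ ^ 2 := by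
    rw [EuclideanSpace.norm_eq, Real.sq_sqrt (by positivity), Fintype.sum_prod_type]
  have step1 : ‖Matrix.toEuclideanCLM (𝕜 := ℂ) M x‖ ^ 2 = ∑ i, ‖g i‖ ^ 2 := by
    rw [hTxsq]
    have hzero : ∀ a ∈ Finset.univ, a ∉ Finset.univ.image r →
        (∑ b, ‖∑ i, (if r i = a then g i b else 0)‖ ^ 2) = 0 := by
      intro a _ ha
      refine Finset.sum_eq_zero fun b _ => ?_
      have : (∑ i, (if r i = a then g i b else 0)) = 0 := by
        refine Finset.sum_eq_zero fun i _ => if_neg fun h => ha ?_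
        exact Finset.mem_image.2 ⟨i, Finset.mem_univ i, h⟩
      rw [this]; simp
    calc ∑ a, ∑ b, ‖Matrix.toEuclideanCLM (𝕜 := ℂ) M x (a, b)‖ ^ 2
        = ∑ a, ∑ b, ‖∑ i, (if r i = a then g i b else 0)‖ ^ 2 := by
          refine Finset.sum_congr rfl fun a _ => Finset.sum_congr rfl fun b _ => ?_
          rw [hcomp]
      _ = ∑ a ∈ Finset.univ.image r, ∑ b, ‖∑ i, (if r i = a then g i b else 0)‖ ^ 2 :=
          (Finset.sum_subset (Finset.subset_univ _) hzero).symm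
      _ = ∑ i, ∑ b, ‖∑ i', (if r i' = r i then g i' b else 0)‖ ^ 2 :=
          Finset.sum_image (fun i _ i' _ h => hr h)
      _ = ∑ i, ‖g i‖ ^ 2 := by
          refine Finset.sum_congr rfl fun i _ => ?_
          rw [euc_norm_sq]
          refine Finset.sum_congr rfl fun b _ => ?_
          congr 1
          simp_rw [hr.eq_iff]
          simp
  -- bound each row block
  have step2 : ∀ i, ‖g i‖ ^ 2 ≤ (Fintype.card κ : ℝ) * β ^ 2 * ∑ j, ‖v i j‖ ^ 2 := by
    intro i
    have h1 : ‖g i‖ ≤ ∑ j, ‖Matrix.toEuclideanCLM (𝕜 := ℂ) (B i j) (v i j)‖ := by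
      rw [hg]; exact norm_sum_le _ _
    have h2 : ‖g i‖ ^ 2 ≤ (∑ j, ‖Matrix.toEuclideanCLM (𝕜 := ℂ) (B i j) (v i j)‖) ^ 2 :=
      pow_le_pow_left₀ (norm_nonneg _) h1 2
    have h3 := sq_sum_le_card_mul_sum_sq
      (s := (Finset.univ : Finset κ))
      (f := fun j => ‖Matrix.toEuclideanCLM (𝕜 := ℂ) (B i j) (v i j)‖)
    have h4 : ∑ j, ‖Matrix.toEuclideanCLM (𝕜 := ℂ) (B i j) (v i j)‖ ^ 2
        ≤ ∑ j, β ^ 2 * ‖v i j‖ ^ 2 := by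
      refine Finset.sum_le_sum fun j _ => ?_
      have := (Matrix.toEuclideanCLM (𝕜 := ℂ) (B i j)).le_opNorm (v i j)
      have h5 : ‖Matrix.toEuclideanCLM (𝕜 := ℂ) (B i j) (v i j)‖ ≤ β * ‖v i j‖ :=
        this.trans (mul_le_mul_of_nonneg_right (hB i j) (norm_nonneg _))
      calc ‖Matrix.toEuclideanCLM (𝕜 := ℂ) (B i j) (v i j)‖ ^ 2 ≤ (β * ‖v i j‖) ^ 2 :=
            pow_le_pow_left₀ (norm_nonneg _) h5 2
        _ = β ^ 2 * ‖v i j‖ ^ 2 := by ring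
    have hcard : (((Finset.univ : Finset κ).card) : ℝ) = (Fintype.card κ : ℝ) := by
      rw [Finset.card_univ]
    calc ‖g i‖ ^ 2
        ≤ (((Finset.univ : Finset κ).card) : ℝ)
            * ∑ j, ‖Matrix.toEuclideanCLM (𝕜 := ℂ) (B i j) (v i j)‖ ^ 2 := h2.trans h3
      _ ≤ (Fintype.card κ : ℝ) * ∑ j, β ^ 2 * ‖v i j‖ ^ 2 := by
          rw [hcard]; exact mul_le_mul_of_nonneg_left h4 (by positivity)
      _ = (Fintype.card κ : ℝ) * β ^ 2 * ∑ j, ‖v i j‖ ^ 2 := by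
          rw [Finset.mul_sum, Finset.mul_sum]
          exact Finset.sum_congr rfl fun j _ => by ring
  -- bound the total mass of the blocks of x used
  have step3 : ∑ i, ∑ j, ‖v i j‖ ^ 2 ≤ ‖x‖ ^ 2 := by
    have hvsq : ∀ i j, ‖v i j‖ ^ 2 = ∑ b, ‖y (c i j, b)‖ ^ 2 := by
      intro i j
      rw [euc_norm_sq]
      exact Finset.sum_congr rfl fun b _ => rfl
    have hxsq : ‖x‖ ^ 2 = ∑ q : Fin n × Fin N, ‖x q‖ ^ 2 := by
      rw [EuclideanSpace.norm_eq, Real.sq_sqrt (by positivity)]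
    calc ∑ i, ∑ j, ‖v i j‖ ^ 2 = ∑ q : ι × κ, ∑ b, ‖y (c q.1 q.2, b)‖ ^ 2 := by
          rw [Fintype.sum_prod_type]
          exact Finset.sum_congr rfl fun i _ => Finset.sum_congr rfl fun j _ => hvsq i j
      _ = ∑ a ∈ Finset.univ.image (fun q : ι × κ => c q.1 q.2), ∑ b, ‖y (a, b)‖ ^ 2 :=
          (Finset.sum_image (g := fun q : ι × κ => c q.1 q.2)
            (f := fun a => ∑ b, ‖y (a, b)‖ ^ 2) (fun q _ q' _ h => hc h)).symm
      _ ≤ ∑ a : Fin n, ∑ b, ‖y (a, b)‖ ^ 2 := by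
          refine Finset.sum_le_sum_of_subset_of_nonneg (Finset.subset_univ _)
            fun a _ _ => by positivity
      _ = ‖x‖ ^ 2 := by rw [hxsq, Fintype.sum_prod_type]
  -- put it all together
  have hfinal : ‖Matrix.toEuclideanCLM (𝕜 := ℂ) M x‖ ^ 2
      ≤ (β * Real.sqrt (Fintype.card κ) * ‖x‖) ^ 2 := by
    have h6 : (β * Real.sqrt (Fintype.card κ) * ‖x‖) ^ 2
        = (Fintype.card κ : ℝ) * β ^ 2 * ‖x‖ ^ 2 := by
      rw [mul_pow, mul_pow, Real.sq_sqrt (by positivity)]; ring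
    rw [h6, step1]
    calc ∑ i, ‖g i‖ ^ 2 ≤ ∑ i, (Fintype.card κ : ℝ) * β ^ 2 * ∑ j, ‖v i j‖ ^ 2 :=
          Finset.sum_le_sum fun i _ => step2 i
      _ = (Fintype.card κ : ℝ) * β ^ 2 * ∑ i, ∑ j, ‖v i j‖ ^ 2 := by
          rw [Finset.mul_sum]
      _ ≤ (Fintype.card κ : ℝ) * β ^ 2 * ‖x‖ ^ 2 :=
          mul_le_mul_of_nonneg_left step3 (by positivity)
  calc ‖Matrix.toEuclideanCLM (𝕜 := ℂ) M x‖
      = Real.sqrt (‖Matrix.toEuclideanCLM (𝕜 := ℂ) M x‖ ^ 2) :=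
        (Real.sqrt_sq (norm_nonneg _)).symm
    _ ≤ Real.sqrt ((β * Real.sqrt (Fintype.card κ) * ‖x‖) ^ 2) := Real.sqrt_le_sqrt hfinal
    _ = β * Real.sqrt (Fintype.card κ) * ‖x‖ := Real.sqrt_sq (by positivity)

private lemma encode_inj {k i i' j j' : ℕ} (hj : j < k + 1) (hj' : j' < k + 1)
    (h : i * (k + 1) + j = i' * (k + 1) + j') : i = i' ∧ j = j' := by
  have h1 : (i * (k + 1) + j) / (k + 1) = i := by
    rw [Nat.add_comm, Nat.add_mul_div_right _ _ (Nat.succ_pos k), Nat.div_eq_of_lt hj]; omega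
  have h2 : (i' * (k + 1) + j') / (k + 1) = i' := by
    rw [Nat.add_comm, Nat.add_mul_div_right _ _ (Nat.succ_pos k), Nat.div_eq_of_lt hj']; omega
  have h3 : i = i' := by rw [← h1, ← h2, h]
  subst h3
  exact ⟨rfl, by omega⟩

private lemma lt_block {m k i j : ℕ} (hi : i < m) (hj : j < k + 1) :
    i * (k + 1) + j < m * (k + 1) :=
  calc i * (k + 1) + j < i * (k + 1) + (k + 1) := by omega
    _ = (i + 1) * (k + 1) := by ring
    _ ≤ m * (k + 1) := Nat.mul_le_mul_right _ hi

private lemma sum_kronecker' {α : Type*} [CommRing α] {l q r s : Type*} {ι : Type*}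
    (t : Finset ι) (A : ι → Matrix l q α) (B : Matrix r s α) :
    (∑ j ∈ t, A j) ⊗ₖ B = ∑ j ∈ t, (A j ⊗ₖ B) := by
  ext ⟨a, b⟩ ⟨a', b'⟩
  simp [Matrix.sum_apply, Finset.sum_mul]

private lemma numeric_ineq {k : ℕ} (hk : 5 ≤ k) :
    1 + Real.sqrt ((k : ℝ) + 1) + 1 ≤ 2 * Real.sqrt (k : ℝ) := by
  have hk' : (5 : ℝ) ≤ (k : ℝ) := by exact_mod_cast hk
  have hb0 : (0 : ℝ) ≤ Real.sqrt ((k : ℝ) + 1) := Real.sqrt_nonneg _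
  have hb : Real.sqrt ((k : ℝ) + 1) ≤ (3 * (k : ℝ) - 5) / 4 := by
    have h := Real.sqrt_le_sqrt (show (k : ℝ) + 1 ≤ ((3 * (k : ℝ) - 5) / 4) ^ 2 by nlinarith)
    rwa [Real.sqrt_sq (by nlinarith)] at h
  have h2 : 2 + Real.sqrt ((k : ℝ) + 1) ≤ 2 * Real.sqrt (k : ℝ) := by
    have h := Real.sqrt_le_sqrt (show (2 + Real.sqrt ((k : ℝ) + 1)) ^ 2 ≤ 4 * (k : ℝ) by
      have hbsq : (Real.sqrt ((k : ℝ) + 1)) ^ 2 = (k : ℝ) + 1 :=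
        Real.sq_sqrt (by positivity)
      nlinarith)
    rwa [Real.sqrt_sq (by positivity), show (4 : ℝ) * (k : ℝ) = 2 ^ 2 * (k : ℝ) by ring,
      Real.sqrt_mul (by norm_num), Real.sqrt_sq (by norm_num)] at h
  linarith

private lemma norm_one_clm_le {N : ℕ} :
    ‖Matrix.toEuclideanCLM (𝕜 := ℂ) (1 : Matrix (Fin N) (Fin N) ℂ)‖ ≤ 1 := by
  rw [_root_.map_one, ContinuousLinearMap.one_def]
  exact ContinuousLinearMap.norm_id_le

theorem Cmkp_norm_le (m k p N : ℕ) (hm : 0 < m) (hp : 0 < p) (hk : 5 ≤ k)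
    (A : Matrix (Fin N) (Fin N) ℂ)
    (hA : ‖Matrix.toEuclideanCLM (𝕜 := ℂ) A‖ ≤ 1) :
    ‖Matrix.toEuclideanCLM (𝕜 := ℂ) (Cmkp m k p N A)‖ ≤ 2 * Real.sqrt k := by
  classical
  -- the identity part
  have hI : ‖Matrix.toEuclideanCLM (𝕜 := ℂ)
      ((∑ j : Fin (m * (k + 1) + p + 1), single j j (1 : ℂ)) ⊗ₖ
        (1 : Matrix (Fin N) (Fin N) ℂ))‖ ≤ 1 := by
    rw [sum_kronecker']
    have key := key_norm_le (r := fun a : Fin (m * (k + 1) + p + 1) => a)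
      (c := fun a (_ : Fin 1) => a)
      (B := fun _ _ => (1 : Matrix (Fin N) (Fin N) ℂ)) 1 zero_le_one
      (fun _ _ h => h)
      (fun q q' h => Prod.ext h (Subsingleton.elim _ _))
      (fun _ _ => norm_one_clm_le)
    simp only [Fin.sum_univ_one, Fintype.card_fin, Nat.cast_one, Real.sqrt_one, mul_one] at key
    exact key
  -- the wide rows part (third sum)
  have hS : ‖Matrix.toEuclideanCLM (𝕜 := ℂ)
      (∑ i : Fin m, ∑ j : Fin (k + 1),
        single
          (⟨(i + 1) * (k + 1), Nat.lt_succ_of_le (idx_lt' i.2)⟩ : Fin (m * (k + 1) + p + 1))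
          (⟨i * (k + 1) + j, idx_lt i.2 j.2⟩ : Fin (m * (k + 1) + p + 1)) (1 : ℂ)
          ⊗ₖ (1 : Matrix (Fin N) (Fin N) ℂ))‖ ≤ Real.sqrt ((k : ℝ) + 1) := by
    have hr : Function.Injective (fun i : Fin m =>
        (⟨(i + 1) * (k + 1), Nat.lt_succ_of_le (idx_lt' i.2)⟩ : Fin (m * (k + 1) + p + 1))) := by
      intro a b h
      have h1 := congrArg Fin.val h
      simp only at h1
      have h2 : (a : ℕ) + 1 = (b : ℕ) + 1 := Nat.eq_of_mul_eq_mul_right (by omega) h1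
      exact Fin.ext (by omega)
    have hc : Function.Injective (fun q : Fin m × Fin (k + 1) =>
        (⟨(q.1 : ℕ) * (k + 1) + q.2, idx_lt q.1.2 q.2.2⟩ : Fin (m * (k + 1) + p + 1))) := by
      intro q q' h
      have h1 := congrArg Fin.val h
      simp only at h1
      obtain ⟨h2, h3⟩ := encode_inj q.2.2 q'.2.2 h1
      exact Prod.ext (Fin.ext h2) (Fin.ext h3)
    have key := key_norm_le
      (r := fun i : Fin m =>
        (⟨(i + 1) * (k + 1), Nat.lt_succ_of_le (idx_lt' i.2)⟩ : Fin (m * (k + 1) + p + 1)))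
      (c := fun (i : Fin m) (j : Fin (k + 1)) => (⟨(i : ℕ) * (k + 1) + j, idx_lt i.2 j.2⟩ : Fin (m * (k + 1) + p + 1)))
      (B := fun _ _ => (1 : Matrix (Fin N) (Fin N) ℂ)) 1 zero_le_one hr hc
      (fun _ _ => norm_one_clm_le)
    simp only [Fintype.card_fin, one_mul] at key
    push_cast at key
    exact key
  -- the subdiagonal part (second and fourth sums together)
  have hAT : ‖Matrix.toEuclideanCLM (𝕜 := ℂ)
      ((∑ i : Fin m, ∑ j : Fin k,
        single
          (⟨i * (k + 1) + (j + 1), idx_lt i.2 (by omega)⟩ : Fin (m * (k + 1) + p + 1))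
          (⟨i * (k + 1) + j, idx_lt i.2 (by omega)⟩ : Fin (m * (k + 1) + p + 1)) (1 : ℂ)
          ⊗ₖ ((((j : ℕ) + 1 : ℂ))⁻¹ • A))
      + ∑ j : Fin p,
        single
          (⟨m * (k + 1) + (j + 1), by omega⟩ : Fin (m * (k + 1) + p + 1))
          (⟨m * (k + 1) + j, by omega⟩ : Fin (m * (k + 1) + p + 1)) (1 : ℂ)
          ⊗ₖ (1 : Matrix (Fin N) (Fin N) ℂ))‖ ≤ 1 := by
    set R : (Fin m × Fin k) ⊕ Fin p → Fin (m * (k + 1) + p + 1) :=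
      Sum.elim
        (fun q : Fin m × Fin k =>
          (⟨(q.1 : ℕ) * (k + 1) + ((q.2 : ℕ) + 1), idx_lt q.1.2 (by omega)⟩ :
            Fin (m * (k + 1) + p + 1)))
        (fun j : Fin p => (⟨m * (k + 1) + ((j : ℕ) + 1), by omega⟩ :
            Fin (m * (k + 1) + p + 1))) with hR
    set Cc : (Fin m × Fin k) ⊕ Fin p → Fin 1 → Fin (m * (k + 1) + p + 1) :=
      fun q _ => Sum.elim
        (fun q : Fin m × Fin k =>
          (⟨(q.1 : ℕ) * (k + 1) + (q.2 : ℕ), idx_lt q.1.2 (by omega)⟩ :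
            Fin (m * (k + 1) + p + 1)))
        (fun j : Fin p => (⟨m * (k + 1) + (j : ℕ), by omega⟩ :
            Fin (m * (k + 1) + p + 1))) q with hCc
    set Bb : (Fin m × Fin k) ⊕ Fin p → Fin 1 → Matrix (Fin N) (Fin N) ℂ :=
      fun q _ => Sum.elim
        (fun q : Fin m × Fin k => (((q.2 : ℕ) + 1 : ℂ))⁻¹ • A)
        (fun _ : Fin p => (1 : Matrix (Fin N) (Fin N) ℂ)) q with hBb
    have hr : Function.Injective (fun q => R q) := by
      intro q q' h
      have h1 := congrArg Fin.val h
      rcases q with ⟨i, j⟩ | j <;> rcases q' with ⟨i', j'⟩ | j' <;>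
        simp only [hR, Sum.elim_inl, Sum.elim_inr] at h1
      · obtain ⟨hi, hj⟩ := encode_inj (by omega : (j : ℕ) + 1 < k + 1)
          (by omega : (j' : ℕ) + 1 < k + 1) h1
        have : (j : ℕ) = (j' : ℕ) := by omega
        simp [Prod.ext_iff, Fin.ext_iff, hi, this]
      · exact absurd h1 (by
          have := lt_block (m := m) i.2 (show (j : ℕ) + 1 < k + 1 by omega)
          omega)
      · exact absurd h1 (by
          have := lt_block (m := m) i'.2 (show (j' : ℕ) + 1 < k + 1 by omega)
          omega)
      · have : (j : ℕ) = (j' : ℕ) := by omega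
        simp [Fin.ext_iff, this]
    have hc : Function.Injective
        (fun q : ((Fin m × Fin k) ⊕ Fin p) × Fin 1 => Cc q.1 q.2) := by
      rintro ⟨s, u⟩ ⟨s', u'⟩ h
      simp only at h
      have h1 := congrArg Fin.val h
      refine Prod.ext ?_ (Subsingleton.elim _ _)
      show s = s'
      rcases s with ⟨i, j⟩ | j <;> rcases s' with ⟨i', j'⟩ | j' <;>
        simp only [hCc, Sum.elim_inl, Sum.elim_inr] at h1
      · obtain ⟨hi, hj⟩ := encode_inj (by omega : (j : ℕ) < k + 1)
          (by omega : (j' : ℕ) < k + 1) h1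
        simp [Prod.ext_iff, Fin.ext_iff, hi, hj]
      · exact absurd h1 (by
          have := lt_block (m := m) i.2 (show (j : ℕ) < k + 1 by omega)
          omega)
      · exact absurd h1 (by
          have := lt_block (m := m) i'.2 (show (j' : ℕ) < k + 1 by omega)
          omega)
      · have : (j : ℕ) = (j' : ℕ) := by omega
        simp [Fin.ext_iff, this]
    have hB : ∀ q j, ‖Matrix.toEuclideanCLM (𝕜 := ℂ) (Bb q j)‖ ≤ 1 := by
      intro q j
      rcases q with ⟨i, j'⟩ | j'
      · simp only [hBb, Sum.elim_inl]
        rw [_root_.map_smul]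
        refine le_trans (ContinuousLinearMap.opNorm_smul_le _ _) ?_
        have hnorm : ‖(((j' : ℕ) + 1 : ℂ))⁻¹‖ ≤ 1 := by
          rw [norm_inv]
          have h1 : ‖(((j' : ℕ) + 1 : ℂ))‖ = ((j' : ℕ) : ℝ) + 1 := by
            rw [show (((j' : ℕ) : ℂ) + 1) = (((j' : ℕ) + 1 : ℕ) : ℂ) by push_cast; ring,
              Complex.norm_natCast]
            push_cast; ring
          rw [h1]
          rw [inv_le_one_iff₀]
          right
          have : (0 : ℝ) ≤ ((j' : ℕ) : ℝ) := by positivity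
          linarith
        calc ‖(((j' : ℕ) + 1 : ℂ))⁻¹‖ * ‖Matrix.toEuclideanCLM (𝕜 := ℂ) A‖
            ≤ 1 * 1 := mul_le_mul hnorm hA (norm_nonneg _) zero_le_one
          _ = 1 := by ring
      · simp only [hBb, Sum.elim_inr]
        exact norm_one_clm_le
    have key := key_norm_le (r := R) (c := Cc) (B := Bb) 1 zero_le_one hr hc hB
    simp only [Fintype.card_fin, Nat.cast_one, Real.sqrt_one, mul_one] at key
    have hrw : (∑ i : (Fin m × Fin k) ⊕ Fin p, ∑ j : Fin 1,
          single (R i) (Cc i j) (1 : ℂ) ⊗ₖ Bb i j)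
        = (∑ i : Fin m, ∑ j : Fin k,
            single
              (⟨i * (k + 1) + (j + 1), idx_lt i.2 (by omega)⟩ : Fin (m * (k + 1) + p + 1))
              (⟨i * (k + 1) + j, idx_lt i.2 (by omega)⟩ : Fin (m * (k + 1) + p + 1)) (1 : ℂ)
              ⊗ₖ ((((j : ℕ) + 1 : ℂ))⁻¹ • A))
          + ∑ j : Fin p,
            single
              (⟨m * (k + 1) + (j + 1), by omega⟩ : Fin (m * (k + 1) + p + 1))
              (⟨m * (k + 1) + j, by omega⟩ : Fin (m * (k + 1) + p + 1)) (1 : ℂ)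
              ⊗ₖ (1 : Matrix (Fin N) (Fin N) ℂ) := by
      rw [Fintype.sum_sum_type, Fintype.sum_prod_type]
      simp only [hR, hCc, hBb, Sum.elim_inl, Sum.elim_inr, Fin.sum_univ_one]
    rw [hrw] at key
    exact key
  -- assemble
  unfold Cmkp
  rw [show
    ((∑ j : Fin (m * (k + 1) + p + 1), single j j (1 : ℂ)) ⊗ₖ
        (1 : Matrix (Fin N) (Fin N) ℂ))
      - (∑ i : Fin m, ∑ j : Fin k,
          single
            (⟨i * (k + 1) + (j + 1), idx_lt i.2 (by omega)⟩ : Fin (m * (k + 1) + p + 1))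
            (⟨i * (k + 1) + j, idx_lt i.2 (by omega)⟩ : Fin (m * (k + 1) + p + 1)) (1 : ℂ)
            ⊗ₖ ((((j : ℕ) + 1 : ℂ))⁻¹ • A))
      - (∑ i : Fin m, ∑ j : Fin (k + 1),
          single
            (⟨(i + 1) * (k + 1), Nat.lt_succ_of_le (idx_lt' i.2)⟩ : Fin (m * (k + 1) + p + 1))
            (⟨i * (k + 1) + j, idx_lt i.2 j.2⟩ : Fin (m * (k + 1) + p + 1)) (1 : ℂ)
            ⊗ₖ (1 : Matrix (Fin N) (Fin N) ℂ))
      - (∑ j : Fin p,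
          single
            (⟨m * (k + 1) + (j + 1), by omega⟩ : Fin (m * (k + 1) + p + 1))
            (⟨m * (k + 1) + j, by omega⟩ : Fin (m * (k + 1) + p + 1)) (1 : ℂ)
            ⊗ₖ (1 : Matrix (Fin N) (Fin N) ℂ))
    = ((∑ j : Fin (m * (k + 1) + p + 1), single j j (1 : ℂ)) ⊗ₖ
        (1 : Matrix (Fin N) (Fin N) ℂ))
      - (∑ i : Fin m, ∑ j : Fin (k + 1),
          single
            (⟨(i + 1) * (k + 1), Nat.lt_succ_of_le (idx_lt' i.2)⟩ : Fin (m * (k + 1) + p + 1))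
            (⟨i * (k + 1) + j, idx_lt i.2 j.2⟩ : Fin (m * (k + 1) + p + 1)) (1 : ℂ)
            ⊗ₖ (1 : Matrix (Fin N) (Fin N) ℂ))
      - ((∑ i : Fin m, ∑ j : Fin k,
          single
            (⟨i * (k + 1) + (j + 1), idx_lt i.2 (by omega)⟩ : Fin (m * (k + 1) + p + 1))
            (⟨i * (k + 1) + j, idx_lt i.2 (by omega)⟩ : Fin (m * (k + 1) + p + 1)) (1 : ℂ)
            ⊗ₖ ((((j : ℕ) + 1 : ℂ))⁻¹ • A))
        + ∑ j : Fin p,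
          single
            (⟨m * (k + 1) + (j + 1), by omega⟩ : Fin (m * (k + 1) + p + 1))
            (⟨m * (k + 1) + j, by omega⟩ : Fin (m * (k + 1) + p + 1)) (1 : ℂ)
            ⊗ₖ (1 : Matrix (Fin N) (Fin N) ℂ))
    from by abel]
  rw [map_sub, map_sub]
  refine le_trans (norm_sub_le _ _) ?_
  refine le_trans (add_le_add_left (norm_sub_le _ _) _) ?_
  refine le_trans (add_le_add (add_le_add hI hS) hAT) ?_
  have := numeric_ineq hk
  linarith
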